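/- Let n ≥ 2 and k ≥ 2, and let G = F_n / γ_k(F_n) be the free nilpotent group of rank n and class k−1, i.e., the quotient of the free group F_n on n generators by the k-th term of its lower central series (with γ_1(F_n) = F_n). Let H = Aut(G) act on G in the natural way. Then the derivative subgroup D_H(G) = [G, H], namely the subgroup of G generated by all elements g⁻¹ · φ(g) with g ∈ G and φ ∈ Aut(G), is equal to the whole group G. -/

import Mathlib

section Aux

variable {n : ℕ}

/-- The endomorphism of the free group sending `of i ↦ of i * of j` and fixing others. -/
private def fAdd (i j : Fin n) : FreeGroup (Fin n) →* FreeGroup (Fin n) :=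
  FreeGroup.lift (fun t => if t = i then FreeGroup.of i * FreeGroup.of j else FreeGroup.of t)

/-- The endomorphism of the free group sending `of i ↦ of i * (of j)⁻¹` and fixing others. -/
private def fSub (i j : Fin n) : FreeGroup (Fin n) →* FreeGroup (Fin n) :=
  FreeGroup.lift (fun t => if t = i then FreeGroup.of i * (FreeGroup.of j)⁻¹ else FreeGroup.of t)

private lemma fSub_comp_fAdd (i j : Fin n) (hij : i ≠ j) :
    (fSub i j).comp (fAdd i j) = MonoidHom.id _ := by
  ext t
  simp only [MonoidHom.comp_apply, fAdd, fSub, FreeGroup.lift_apply_of, MonoidHom.id_apply]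
  by_cases ht : t = i
  · subst ht
    simp [if_pos rfl, if_neg (Ne.symm hij), mul_assoc]
  · simp [if_neg ht]

private lemma fAdd_comp_fSub (i j : Fin n) (hij : i ≠ j) :
    (fAdd i j).comp (fSub i j) = MonoidHom.id _ := by
  ext t
  simp only [MonoidHom.comp_apply, fAdd, fSub, FreeGroup.lift_apply_of, MonoidHom.id_apply]
  by_cases ht : t = i
  · subst ht
    simp [if_pos rfl, if_neg (Ne.symm hij), mul_assoc]
  · simp [if_neg ht]

/-- The automorphism of the free group sending `of i ↦ of i * of j`. -/
private def eAdd (i j : Fin n) (hij : i ≠ j) : FreeGroup (Fin n) ≃* FreeGroup (Fin n) :=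
  MonoidHom.toMulEquiv (fAdd i j) (fSub i j) (fSub_comp_fAdd i j hij) (fAdd_comp_fSub i j hij)

private lemma map_lcs_eq (e : FreeGroup (Fin n) ≃* FreeGroup (Fin n)) (m : ℕ) :
    Subgroup.map (e : FreeGroup (Fin n) →* FreeGroup (Fin n))
      ((⊤ : Subgroup (FreeGroup (Fin n))).lowerCentralSeries m) = (⊤ : Subgroup (FreeGroup (Fin n))).lowerCentralSeries m := by
  refine le_antisymm (Subgroup.lowerCentralSeries.map _ m) ?_
  have h1 : Subgroup.map (e : FreeGroup (Fin n) →* FreeGroup (Fin n))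
      (Subgroup.map (e.symm : FreeGroup (Fin n) →* FreeGroup (Fin n))
        ((⊤ : Subgroup (FreeGroup (Fin n))).lowerCentralSeries m)) = (⊤ : Subgroup (FreeGroup (Fin n))).lowerCentralSeries m := by
    rw [Subgroup.map_map]
    convert Subgroup.map_id _
    ext x
    simp
  calc (⊤ : Subgroup (FreeGroup (Fin n))).lowerCentralSeries m
      = Subgroup.map (e : FreeGroup (Fin n) →* FreeGroup (Fin n))
          (Subgroup.map (e.symm : FreeGroup (Fin n) →* FreeGroup (Fin n))
            ((⊤ : Subgroup (FreeGroup (Fin n))).lowerCentralSeries m)) := h1.symm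
    _ ≤ _ := Subgroup.map_mono (Subgroup.lowerCentralSeries.map _ m)

end Aux

/-- Let `G = Fₙ/γₖ(Fₙ)` (`n ≥ 2`, `k ≥ 2`) be the free nilpotent group of rank `n`
and class `k - 1`, where `γ₁(Fₙ) = Fₙ`, so that `γₖ(Fₙ)` is `lowerCentralSeries Fₙ (k-1)`
in Mathlib's indexing. Then the derivative subgroup `D_{Aut G}(G) = [G, Aut G]`,
generated by all `g⁻¹ * φ g` with `g ∈ G`, `φ ∈ Aut G`, is the whole group `G`. -/
theorem derivative_subgroup_of_aut_free_nilpotent_eq_top (n k : ℕ) (hn : 2 ≤ n) (hk : 2 ≤ k) :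
    Subgroup.closure
      {x : FreeGroup (Fin n) ⧸ (⊤ : Subgroup (FreeGroup (Fin n))).lowerCentralSeries (k - 1) |
        ∃ (g : FreeGroup (Fin n) ⧸ (⊤ : Subgroup (FreeGroup (Fin n))).lowerCentralSeries (k - 1))
          (φ : MulAut (FreeGroup (Fin n) ⧸ (⊤ : Subgroup (FreeGroup (Fin n))).lowerCentralSeries (k - 1))),
          x = g⁻¹ * φ g} = ⊤ := by
  set N := (⊤ : Subgroup (FreeGroup (Fin n))).lowerCentralSeries (k - 1) with hN
  set S := {x : FreeGroup (Fin n) ⧸ N |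
        ∃ (g : FreeGroup (Fin n) ⧸ N) (φ : MulAut (FreeGroup (Fin n) ⧸ N)), x = g⁻¹ * φ g}
  -- every generator image lies in the closure
  have key : ∀ j : Fin n, (QuotientGroup.mk (FreeGroup.of j) : FreeGroup (Fin n) ⧸ N) ∈
      Subgroup.closure S := by
    intro j
    -- pick i ≠ j
    haveI : Nontrivial (Fin n) := Fin.nontrivial_iff_two_le.mpr hn
    obtain ⟨i, hij⟩ : ∃ i : Fin n, i ≠ j := exists_ne j
    have e := eAdd i j hij
    have φ : MulAut (FreeGroup (Fin n) ⧸ N) :=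
      QuotientGroup.congr N N (eAdd i j hij) (map_lcs_eq (eAdd i j hij) (k - 1))
    refine Subgroup.subset_closure ?_
    refine ⟨QuotientGroup.mk (FreeGroup.of i),
      QuotientGroup.congr N N (eAdd i j hij) (map_lcs_eq (eAdd i j hij) (k - 1)), ?_⟩
    have h1 : (QuotientGroup.congr N N (eAdd i j hij) (map_lcs_eq (eAdd i j hij) (k - 1)))
        (QuotientGroup.mk (FreeGroup.of i)) =
        QuotientGroup.mk (eAdd i j hij (FreeGroup.of i)) :=
      QuotientGroup.congr_mk N N (eAdd i j hij) _ _
    have h2 : eAdd i j hij (FreeGroup.of i) = FreeGroup.of i * FreeGroup.of j := by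
      show fAdd i j (FreeGroup.of i) = _
      simp [fAdd]
    rw [h1, h2]
    rw [← QuotientGroup.mk_inv, ← QuotientGroup.mk_mul]
    congr 1
    group
  rw [eq_top_iff]
  intro x _
  induction x using QuotientGroup.induction_on with
  | H w =>
    induction w using FreeGroup.induction_on with
    | C1 => exact (Subgroup.closure S).one_mem
    | of t => exact key t
    | inv_of t _ =>
      rw [QuotientGroup.mk_inv]
      exact (Subgroup.closure S).inv_mem (key t)
    | mul a b ha hb =>
      rw [QuotientGroup.mk_mul]
      exact (Subgroup.closure S).mul_mem (ha trivial) (hb trivial)
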